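/- For probability measures P ≪ Q on a finite space, KL(P‖Q) = sup_f { E_P[f] − log E_Q[e^f] }, where the supremum is over all real-valued functions f (Donsker–Varadhan representation). -/

import Mathlib

/-- Kullback–Leibler divergence between pmfs `P` and `Q` on a finite space. -/
noncomputable def KLdiv {Ω : Type*} [Fintype Ω] (P Q : Ω → ℝ) : ℝ :=
  ∑ ω, P ω * Real.log (P ω / Q ω)

/-- **Donsker–Varadhan representation.** For probability measures `P ≪ Q` on a
finite space, `KL(P‖Q) = sup_f { E_P[f] − log E_Q[e^f] }`, the supremum ranging
over all real-valued functions `f`. -/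
theorem donsker_varadhan {Ω : Type*} [Fintype Ω] (P Q : Ω → ℝ)
    (hP : ∀ ω, 0 ≤ P ω) (hPsum : ∑ ω, P ω = 1)
    (hQ : ∀ ω, 0 ≤ Q ω) (hQsum : ∑ ω, Q ω = 1)
    (hac : ∀ ω, Q ω = 0 → P ω = 0) :
    KLdiv P Q =
      ⨆ f : Ω → ℝ, ((∑ ω, P ω * f ω) - Real.log (∑ ω, Q ω * Real.exp (f ω))) := by
  classical
  set g : (Ω → ℝ) → ℝ :=
    fun f => (∑ ω, P ω * f ω) - Real.log (∑ ω, Q ω * Real.exp (f ω)) with hg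
  -- Upper bound: every candidate value is at most KL
  have key : ∀ f : Ω → ℝ, g f ≤ KLdiv P Q := by
    intro f
    set S := ∑ ω, Q ω * Real.exp (f ω) with hSdef
    have hSpos : 0 < S := by
      obtain ⟨ω0, hω0⟩ : ∃ ω, 0 < Q ω := by
        by_contra h
        push_neg at h
        have hz : ∑ ω, Q ω = 0 :=
          Finset.sum_eq_zero fun ω _ => le_antisymm (h ω) (hQ ω)
        rw [hz] at hQsum; norm_num at hQsum
      refine Finset.sum_pos' (fun ω _ => mul_nonneg (hQ ω) (Real.exp_pos _).le)
        ⟨ω0, Finset.mem_univ _, mul_pos hω0 (Real.exp_pos _)⟩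
    have hterm : ∀ ω, P ω * f ω - P ω * Real.log S - P ω * Real.log (P ω / Q ω)
        ≤ Q ω * Real.exp (f ω) / S - P ω := by
      intro ω
      by_cases hPω : P ω = 0
      · simp only [hPω, zero_mul, sub_zero, zero_sub, neg_zero, sub_zero]
        have : 0 ≤ Q ω * Real.exp (f ω) / S :=
          div_nonneg (mul_nonneg (hQ ω) (Real.exp_pos _).le) hSpos.le
        linarith
      · have hP0 : 0 < P ω := lt_of_le_of_ne (hP ω) (Ne.symm hPω)
        have hQ0 : 0 < Q ω := by
          rcases lt_of_le_of_ne (hQ ω) (fun h => hPω (hac ω h.symm)) with h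
          exact h
        set x : ℝ := Q ω * Real.exp (f ω) / (S * P ω) with hxdef
        have hx0 : 0 < x := by positivity
        have hlog : Real.log x ≤ x - 1 := Real.log_le_sub_one_of_pos hx0
        have hlogx : Real.log x = Real.log (Q ω) + f ω - Real.log S - Real.log (P ω) := by
          rw [hxdef, Real.log_div (by positivity) (by positivity),
            Real.log_mul (by positivity) (Real.exp_ne_zero _),
            Real.log_mul (ne_of_gt hSpos) (ne_of_gt hP0), Real.log_exp]
          ring
        have hlogPQ : Real.log (P ω / Q ω) = Real.log (P ω) - Real.log (Q ω) :=
          Real.log_div (ne_of_gt hP0) (ne_of_gt hQ0)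
        have h1 : P ω * Real.log x ≤ P ω * x - P ω := by nlinarith
        have hPx : P ω * x = Q ω * Real.exp (f ω) / S := by
          field_simp [hxdef]
          rw [hxdef]
          field_simp
        rw [hlogx] at h1
        rw [hlogPQ]
        nlinarith [h1, hPx]
    have hsum : ∑ ω, (P ω * f ω - P ω * Real.log S - P ω * Real.log (P ω / Q ω))
        ≤ ∑ ω, (Q ω * Real.exp (f ω) / S - P ω) :=
      Finset.sum_le_sum (fun ω _ => hterm ω)
    have hL : ∑ ω, (P ω * f ω - P ω * Real.log S - P ω * Real.log (P ω / Q ω))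
        = (∑ ω, P ω * f ω) - Real.log S - KLdiv P Q := by
      rw [Finset.sum_sub_distrib, Finset.sum_sub_distrib, ← Finset.sum_mul, hPsum,
        one_mul, KLdiv]
    have hR : ∑ ω, (Q ω * Real.exp (f ω) / S - P ω) = 0 := by
      rw [Finset.sum_sub_distrib, hPsum, ← Finset.sum_div, ← hSdef,
        div_self (ne_of_gt hSpos)]
      norm_num
    rw [hL, hR] at hsum
    rw [hg]
    simp only
    linarith
  have hbdd : BddAbove (Set.range g) := ⟨KLdiv P Q, by rintro _ ⟨f, rfl⟩; exact key f⟩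
  refine le_antisymm ?_ (ciSup_le key)
  refine le_of_forall_pos_le_add fun ε hε => ?_
  -- near-optimal witness
  set c : ℝ := ∑ ω, (if P ω = 0 then Q ω else 0) with hcdef
  have hc0 : 0 ≤ c := Finset.sum_nonneg fun ω _ => by by_cases h : P ω = 0 <;> simp [h, hQ ω]
  set M : ℝ := Real.log ((c + 1) / ε) with hMdef
  have hexpM : Real.exp (-M) = ε / (c + 1) := by
    rw [hMdef, ← Real.log_inv, Real.exp_log (by positivity)]
    rw [inv_div]
  set f : Ω → ℝ := fun ω => if P ω = 0 then -M else Real.log (P ω / Q ω) with hfdef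
  have hPf : ∑ ω, P ω * f ω = KLdiv P Q := by
    rw [KLdiv]
    refine Finset.sum_congr rfl fun ω _ => ?_
    by_cases h : P ω = 0 <;> simp [hfdef, h]
  have hQf : ∑ ω, Q ω * Real.exp (f ω) = 1 + Real.exp (-M) * c := by
    have h1 : ∀ ω, Q ω * Real.exp (f ω)
        = P ω + Real.exp (-M) * (if P ω = 0 then Q ω else 0) := by
      intro ω
      by_cases h : P ω = 0
      · simp [hfdef, h]; ring
      · have hP0 : 0 < P ω := lt_of_le_of_ne (hP ω) (Ne.symm h)
        have hQ0 : 0 < Q ω := lt_of_le_of_ne (hQ ω) (fun hq => h (hac ω hq.symm))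
        simp only [hfdef, h, if_false, Real.exp_log (by positivity : (0:ℝ) < P ω / Q ω),
          mul_zero, add_zero]
        field_simp
      
    rw [Finset.sum_congr rfl fun ω _ => h1 ω, Finset.sum_add_distrib, hPsum,
      ← Finset.mul_sum, ← hcdef]
  have hSge : (0:ℝ) < 1 + Real.exp (-M) * c := by positivity
  have hlogS : Real.log (1 + Real.exp (-M) * c) ≤ ε := by
    have h2 : Real.log (1 + Real.exp (-M) * c) ≤ Real.exp (-M) * c := by
      have := Real.log_le_sub_one_of_pos hSge
      linarith
    have h3 : Real.exp (-M) * c ≤ ε := by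
      rw [hexpM]
      rw [div_mul_eq_mul_div, div_le_iff₀ (by positivity)]
      nlinarith
    linarith
  have hgf : KLdiv P Q - ε ≤ g f := by
    rw [hg]
    simp only
    rw [hPf, hQf]
    linarith
  have := le_ciSup hbdd f
  calc KLdiv P Q ≤ g f + ε := by linarith
    _ ≤ (⨆ f, g f) + ε := by linarith
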